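/- Let p be an odd prime and n ≥ 1. For nonzero α, β, γ ∈ 𝔽_p^n with α + β + γ = 0, the identity u_α·u_β + u_β·u_γ + u_γ·u_α = 0 holds in the exterior algebra E. -/

import Mathlib

open MvPolynomial

set_option synthInstance.maxHeartbeats 1000000
set_option maxHeartbeats 1000000

noncomputable section

/-- `K`, the field of fractions of `𝔽_p[x_1, …, x_n]`. -/
abbrev Kf (p n : ℕ) : Type _ := FractionRing (MvPolynomial (Fin n) (ZMod p))

/-- The constant `a ∈ 𝔽_p` regarded as an element of `K`. -/
def cK (p n : ℕ) (a : ZMod p) : Kf p n :=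
  algebraMap (MvPolynomial (Fin n) (ZMod p)) (Kf p n) (C a)

/-- The variable `x_i` regarded as an element of `K`. -/
def xK (p n : ℕ) (i : Fin n) : Kf p n :=
  algebraMap (MvPolynomial (Fin n) (ZMod p)) (Kf p n) (X i)

/-- The linear form `z_α = Σ_i α_i x_i ∈ K`. -/
def zf (p n : ℕ) (α : Fin n → ZMod p) : Kf p n := ∑ i, cK p n (α i) * xK p n i

/-- `t_α = z_α⁻¹ ∈ K`. -/
def tf (p n : ℕ) [Fact (Nat.Prime p)] (α : Fin n → ZMod p) : Kf p n := (zf p n α)⁻¹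

/-- `E`, the exterior algebra over `K` on an `n`-dimensional `K`-vector space
with basis `dx_1, …, dx_n`. -/
abbrev Ef (p n : ℕ) : Type _ := ExteriorAlgebra (Kf p n) (Fin n → Kf p n)

/-- `dx_i ∈ E`. -/
def dxE (p n : ℕ) (i : Fin n) : Ef p n :=
  ExteriorAlgebra.ι (Kf p n) (Pi.single i 1)

/-- `dz_α = Σ_i α_i dx_i ∈ E`. -/
def dzf (p n : ℕ) (α : Fin n → ZMod p) : Ef p n :=
  ∑ i, algebraMap (Kf p n) (Ef p n) (cK p n (α i)) * dxE p n i

/-- `t_α ∈ K ⊆ E`. -/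
def tE (p n : ℕ) [Fact (Nat.Prime p)] (α : Fin n → ZMod p) : Ef p n :=
  algebraMap (Kf p n) (Ef p n) (tf p n α)

/-- `u_α = t_α · dz_α ∈ E`. -/
def uf (p n : ℕ) [Fact (Nat.Prime p)] (α : Fin n → ZMod p) : Ef p n :=
  tE p n α * dzf p n α


def vv (p n : ℕ) (α : Fin n → ZMod p) : Fin n → Kf p n := fun i => cK p n (α i)

lemma dzf_eq (p n : ℕ) (α : Fin n → ZMod p) :
    dzf p n α = ExteriorAlgebra.ι (Kf p n) (vv p n α) := by
  have hvv : vv p n α = ∑ i, cK p n (α i) • (Pi.single i 1 : Fin n → Kf p n) := by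
    funext j
    simp [vv, Finset.sum_apply, Pi.single_apply]
  rw [hvv, map_sum]
  unfold dzf dxE
  refine Finset.sum_congr rfl fun i _ => ?_
  rw [map_smul, Algebra.smul_def]

lemma cK_add (p n : ℕ) (a b : ZMod p) : cK p n (a + b) = cK p n a + cK p n b := by
  simp [cK, map_add]

lemma vv_add (p n : ℕ) (α β : Fin n → ZMod p) : vv p n (α + β) = vv p n α + vv p n β := by
  funext i; simp [vv, cK_add]

lemma vv_zero (p n : ℕ) : vv p n 0 = 0 := by
  funext i; simp [vv, cK]

lemma zf_add (p n : ℕ) (α β : Fin n → ZMod p) : zf p n (α + β) = zf p n α + zf p n β := by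
  simp [zf, cK_add, add_mul, Finset.sum_add_distrib]

lemma zf_zero (p n : ℕ) : zf p n 0 = 0 := by
  simp [zf, cK]

lemma zf_ne_zero (p n : ℕ) [Fact (Nat.Prime p)] (α : Fin n → ZMod p) (hα : α ≠ 0) :
    zf p n α ≠ 0 := by
  have : zf p n α = algebraMap (MvPolynomial (Fin n) (ZMod p)) (Kf p n)
      (∑ i, C (α i) * X i) := by
    simp [zf, cK, xK, map_sum]
  rw [this]
  intro h
  have hinj := IsFractionRing.injective (MvPolynomial (Fin n) (ZMod p)) (Kf p n)
  rw [← map_zero (algebraMap (MvPolynomial (Fin n) (ZMod p)) (Kf p n))] at h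
  have h0 : (∑ i, C (α i) * X i : MvPolynomial (Fin n) (ZMod p)) = 0 := hinj h
  apply hα
  funext j
  have := congrArg (MvPolynomial.coeff (Finsupp.single j 1)) h0
  simpa [MvPolynomial.coeff_sum, MvPolynomial.coeff_C_mul, MvPolynomial.coeff_X',
    Finsupp.single_left_inj] using this

/-- For an odd prime `p`, `n ≥ 1`, and nonzero `α, β, γ ∈ 𝔽_p^n` with `α + β + γ = 0`,
the identity `u_α·u_β + u_β·u_γ + u_γ·u_α = 0` holds in `E`. -/
theorem stmt2 (p n : ℕ) [Fact (Nat.Prime p)] (hodd : Odd p) (hn : 1 ≤ n)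
    (α β γ : Fin n → ZMod p) (hα : α ≠ 0) (hβ : β ≠ 0) (hγ : γ ≠ 0)
    (hsum : α + β + γ = 0) :
    uf p n α * uf p n β + uf p n β * uf p n γ + uf p n γ * uf p n α = 0 := by
  set K := Kf p n
  set ιK := ExteriorAlgebra.ι K (M := Fin n → K)
  have ha := zf_ne_zero p n α hα
  have hb := zf_ne_zero p n β hβ
  have hc := zf_ne_zero p n γ hγ
  have habc : zf p n α + zf p n β + zf p n γ = 0 := by
    rw [← zf_add, ← zf_add, hsum, zf_zero]
  -- scalar identity
  have hscal : tf p n α * tf p n β + tf p n β * tf p n γ + tf p n γ * tf p n α = 0 := by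
    unfold tf
    field_simp
    linear_combination habc
  -- vector identity
  have hv : vv p n γ = -(vv p n α + vv p n β) := by
    have h := eq_neg_of_add_eq_zero_right (by rw [← vv_add, ← vv_add, hsum, vv_zero] :
      (vv p n α + vv p n β) + vv p n γ = 0)
    exact h
  have hmul : ∀ δ ε, uf p n δ * uf p n ε =
      algebraMap K (Ef p n) (tf p n δ * tf p n ε) * (ιK (vv p n δ) * ιK (vv p n ε)) := by
    intro δ ε
    unfold uf tE
    rw [dzf_eq, dzf_eq, map_mul]
    rw [mul_assoc, mul_assoc]
    congr 1
    rw [← mul_assoc, ← Algebra.commutes (tf p n ε), mul_assoc]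
  rw [hmul, hmul, hmul]
  set A := ιK (vv p n α) with hA
  set B := ιK (vv p n β) with hB
  have hC : ιK (vv p n γ) = -(A + B) := by
    rw [hv, map_neg, map_add]
  have hAA : A * A = 0 := ExteriorAlgebra.ι_sq_zero _
  have hBB : B * B = 0 := ExteriorAlgebra.ι_sq_zero _
  have hBA : B * A = -(A * B) :=
    eq_neg_of_add_eq_zero_right (ExteriorAlgebra.ι_add_mul_swap _ _)
  rw [hC]
  have h1 : B * -(A + B) = A * B := by
    rw [mul_neg, mul_add, hBB, hBA]; simp
  have h2 : -(A + B) * A = A * B := by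
    rw [neg_mul, add_mul, hAA, hBA]; simp
  rw [h1, h2, ← add_mul, ← add_mul, ← map_add, ← map_add, hscal, map_zero, zero_mul]


end
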